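/- For q > 0, α ∈ [0,1], and n ≥ 2, the numbers λ_{k,q}^{(α,n)} = (q^{k(k-1)/2} [n-2]_q! / ([n-k]_q! [n]_q^k)) · ((1-α)[n-k]_q[n-1+k]_q + α[n]_q[n-1]_q), for k = 2, ..., n, are pairwise distinct; in fact λ_{k,q}^{(α,n)} < λ_{k-j,q}^{(α,n)} for all 1 ≤ j ≤ k-1. -/
import Mathlib


open Finset Filter Topology

/-- The q-integer `[m]_q = 1 + q + ... + q^{m-1}`, with `[0]_q = 0`. -/
noncomputable def qInt (q : ℝ) (m : ℕ) : ℝ := ∑ i ∈ Finset.range m, q ^ i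

/-- The q-factorial `[n]_q! = [1]_q [2]_q ⋯ [n]_q`. -/
noncomputable def qFact (q : ℝ) (n : ℕ) : ℝ := ∏ i ∈ Finset.range n, qInt q (i + 1)

/-- The q-binomial coefficient `[n]_q!/([k]_q! [n-k]_q!)` (zero if `k > n`). -/
noncomputable def qBinom (q : ℝ) (n k : ℕ) : ℝ :=
  if k ≤ n then qFact q n / (qFact q k * qFact q (n - k)) else 0

/-- The q-Stirling number of the second kind. -/
noncomputable def qStirling (q : ℝ) (k r : ℕ) : ℝ :=
  (1 / (qFact q r * q ^ (r * (r - 1) / 2))) *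
    ∑ i ∈ Finset.range (r + 1),
      (-1 : ℝ) ^ i * q ^ (i * (i - 1) / 2) * qBinom q r i * (qInt q (r - i)) ^ k

/-- The q-forward difference operator on sequences:
`Δ_q^0 f_i = f_i`, `Δ_q^{r+1} f_i = Δ_q^r f_{i+1} - q^r Δ_q^r f_i`. -/
noncomputable def qDiff (q : ℝ) : ℕ → (ℕ → ℝ) → ℕ → ℝ
  | 0, f, i => f i
  | r + 1, f, i => qDiff q r f (i + 1) - q ^ r * qDiff q r f i

/-- The eigenvalues `λ_{k,q}^{(α,n)}` of the (α,q)-Bernstein operator. -/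
noncomputable def lamEig (q α : ℝ) (n k : ℕ) : ℝ :=
  q ^ (k * (k - 1) / 2) * qFact q (n - 2) / (qFact q (n - k) * (qInt q n) ^ k) *
    ((1 - α) * qInt q (n - k) * qInt q (n - 1 + k) + α * qInt q n * qInt q (n - 1))

/-- The coefficients `a_{n,q}(r,k)` of `T_{n,q,α}(t^k; x) = Σ_r a_{n,q}(r,k) x^r`. -/
noncomputable def aCoef (q α : ℝ) (n r k : ℕ) : ℝ :=
  q ^ (r * (r - 1) / 2) * qFact q (n - 2) / ((qInt q n) ^ k * qFact q (n - r)) *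
    ((1 - α) * qInt q (n - r) *
        (qInt q (n + r - 1) * qStirling q (k + 1) (r + 1) -
          qInt q (r + 1) * qInt q (n - 1) * qStirling q k (r + 1)) +
      α * qInt q n * qInt q (n - 1) * qStirling q k r)

/-- The (α,q)-Bernstein operator, via its forward-difference representation
`T_{n,q,α}(f;x) = Σ_{r=0}^n ((1-α) C_q(n-1,r) Δ_q^r g_0 + α C_q(n,r) Δ_q^r f_0) x^r`,
where `f_i = f([i]_q/[n]_q)` and
`g_i = (1 - q^{n-i-1}[i]_q/[n-1]_q) f_i + (q^{n-i-1}[i]_q/[n-1]_q) f_{i+1}`. -/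
noncomputable def Talpha (q α : ℝ) (n : ℕ) (f : ℝ → ℝ) (x : ℝ) : ℝ :=
  let fs : ℕ → ℝ := fun i => f (qInt q i / qInt q n)
  let gs : ℕ → ℝ := fun i =>
    (1 - q ^ (n - i - 1) * qInt q i / qInt q (n - 1)) * fs i +
      (q ^ (n - i - 1) * qInt q i / qInt q (n - 1)) * fs (i + 1)
  ∑ r ∈ Finset.range (n + 1),
    ((1 - α) * qBinom q (n - 1) r * qDiff q r gs 0 + α * qBinom q n r * qDiff q r fs 0) * x ^ r

lemma qInt_nonneg {q : ℝ} (hq : 0 < q) (m : ℕ) : 0 ≤ qInt q m :=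
  Finset.sum_nonneg fun i _ => (pow_pos hq i).le

lemma qInt_pos {q : ℝ} (hq : 0 < q) (m : ℕ) (hm : 0 < m) : 0 < qInt q m :=
  Finset.sum_pos (fun i _ => pow_pos hq i) (Finset.nonempty_range_iff.mpr hm.ne')

lemma qFact_pos {q : ℝ} (hq : 0 < q) (n : ℕ) : 0 < qFact q n :=
  Finset.prod_pos fun i _ => qInt_pos hq _ (Nat.succ_pos i)

lemma qInt_add (q : ℝ) (a b : ℕ) : qInt q (a + b) = qInt q a + q ^ a * qInt q b := by
  unfold qInt
  rw [Finset.sum_range_add, Finset.mul_sum]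
  simp [pow_add]

lemma qInt_succ (q : ℝ) (m : ℕ) : qInt q (m + 1) = qInt q m + q ^ m :=
  Finset.sum_range_succ _ _

lemma qFact_succ (q : ℝ) (m : ℕ) : qFact q (m + 1) = qFact q m * qInt q (m + 1) :=
  Finset.prod_range_succ _ _

lemma lamEig_succ_lt (q α : ℝ) (hq : 0 < q) (h0 : 0 ≤ α) (h1 : α ≤ 1)
    (n k : ℕ) (hk : 1 ≤ k) (hkn : k + 1 ≤ n) :
    lamEig q α n (k + 1) < lamEig q α n k := by
  obtain ⟨e, rfl⟩ : ∃ e, k = e + 1 := ⟨k - 1, by omega⟩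
  obtain ⟨D, rfl⟩ : ∃ D, n = D + e + 2 := ⟨n - e - 2, by omega⟩
  have ht : (e + 1 + 1) * (e + 1 + 1 - 1) / 2 = (e + 1) * (e + 1 - 1) / 2 + (e + 1) := by
    have h : (e + 2) * (e + 1) = (e + 1) * e + (e + 1) * 2 := by ring
    simp only [Nat.add_sub_cancel]
    rw [h, Nat.add_mul_div_right _ _ (by norm_num : (0:ℕ) < 2)]
  unfold lamEig
  rw [ht]
  simp only [show D + e + 2 - (e + 1 + 1) = D from by omega,
    show D + e + 2 - (e + 1) = D + 1 from by omega,
    show D + e + 2 - 2 = D + e from by omega,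
    show D + e + 2 - 1 = D + e + 1 from by omega,
    show D + e + 1 + (e + 1 + 1) = D + (2 * e + 3) from by omega,
    show D + e + 1 + (e + 1) = D + (2 * e + 2) from by omega,
    show e + 1 + 1 = e + 2 from rfl]
  set t := (e + 1) * (e + 1 - 1) / 2 with ht'
  set N := qInt q (D + e + 2) with hNdef
  have hNpos : 0 < N := qInt_pos hq _ (by omega)
  have hD1 : 0 < qInt q (D + 1) := qInt_pos hq _ (by omega)
  have hFD : 0 < qFact q D := qFact_pos hq D
  have hFe : 0 < qFact q (D + e) := qFact_pos hq _
  set B₁ : ℝ := (1 - α) * qInt q (D + 1) * qInt q (D + (2 * e + 2)) +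
      α * N * qInt q (D + e + 1) with hB₁
  set B₂ : ℝ := (1 - α) * qInt q D * qInt q (D + (2 * e + 3)) +
      α * N * qInt q (D + e + 1) with hB₂
  have hn1 : 0 < qInt q (D + e + 1) := qInt_pos hq _ (by omega)
  have h2e2 : 0 < qInt q (D + (2 * e + 2)) := qInt_pos hq _ (by omega)
  -- B₁ > 0
  have hB₁pos : 0 < B₁ := by
    rcases lt_or_ge α 1 with h | h
    · have := mul_pos (mul_pos (by linarith : (0:ℝ) < 1 - α) hD1) h2e2
      have := mul_nonneg (mul_nonneg h0 hNpos.le) hn1.le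
      rw [hB₁]; linarith
    · have : α = 1 := le_antisymm h1 h
      rw [hB₁, this]; simpa using mul_pos hNpos hn1
  -- B₂ ≥ 0
  have hB₂nonneg : 0 ≤ B₂ := by
    have := mul_nonneg (mul_nonneg (by linarith : (0:ℝ) ≤ 1 - α) (qInt_nonneg hq D))
      (qInt_nonneg hq (D + (2 * e + 3)))
    have := mul_nonneg (mul_nonneg h0 hNpos.le) hn1.le
    rw [hB₂]; linarith
  -- B₂ ≤ B₁
  have hBle : B₂ ≤ B₁ := by
    have key : qInt q D * qInt q (D + (2 * e + 3)) ≤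
        qInt q (D + 1) * qInt q (D + (2 * e + 2)) := by
      have e1 : qInt q (D + (2 * e + 3)) = qInt q (D + (2 * e + 2)) + q ^ (D + (2 * e + 2)) := by
        rw [show D + (2 * e + 3) = (D + (2 * e + 2)) + 1 from by omega, qInt_succ]
      have e2 : qInt q (D + 1) = qInt q D + q ^ D := qInt_succ q D
      have e3 : qInt q (D + (2 * e + 2)) = qInt q (2 * e + 2) + q ^ (2 * e + 2) * qInt q D := by
        rw [show D + (2 * e + 2) = (2 * e + 2) + D from by omega, qInt_add]
      have h4 : (0:ℝ) ≤ q ^ D * qInt q (2 * e + 2) :=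
        mul_nonneg (pow_pos hq D).le (qInt_nonneg hq _)
      have h5 : q ^ (D + (2 * e + 2)) = q ^ D * q ^ (2 * e + 2) := pow_add q _ _
      nlinarith [qInt_nonneg hq D, pow_pos hq D, pow_pos hq (2 * e + 2)]
    have h6 : (0:ℝ) ≤ 1 - α := by linarith
    rw [hB₁, hB₂]
    nlinarith [mul_le_mul_of_nonneg_left key h6]
  -- q^(e+1) * [D+1] < N
  have hlt : q ^ (e + 1) * qInt q (D + 1) < N := by
    have : N = qInt q (e + 1) + q ^ (e + 1) * qInt q (D + 1) := by
      rw [hNdef, show D + e + 2 = (e + 1) + (D + 1) from by omega, qInt_add]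
    have := qInt_pos hq (e + 1) (by omega)
    linarith
  -- key inequality
  have key : q ^ (e + 1) * qInt q (D + 1) * B₂ < N * B₁ := by
    calc q ^ (e + 1) * qInt q (D + 1) * B₂ ≤ q ^ (e + 1) * qInt q (D + 1) * B₁ :=
          mul_le_mul_of_nonneg_left hBle (by positivity)
      _ < N * B₁ := mul_lt_mul_of_pos_right hlt hB₁pos
  -- reduce divisions
  rw [div_mul_eq_mul_div, div_mul_eq_mul_div, div_lt_div_iff₀ (mul_pos hFD (pow_pos hNpos _)) (mul_pos (qFact_pos hq _) (pow_pos hNpos _))]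
  have hP : (0:ℝ) < q ^ t * qFact q (D + e) * qFact q D * N ^ (e + 1) := by positivity
  calc q ^ (t + (e + 1)) * qFact q (D + e) * B₂ * (qFact q (D + 1) * N ^ (e + 1))
      = (q ^ t * qFact q (D + e) * qFact q D * N ^ (e + 1)) *
        (q ^ (e + 1) * qInt q (D + 1) * B₂) := by
        rw [qFact_succ, pow_add]; ring
    _ < (q ^ t * qFact q (D + e) * qFact q D * N ^ (e + 1)) * (N * B₁) :=
        mul_lt_mul_of_pos_left key hP
    _ = q ^ t * qFact q (D + e) * B₁ * (qFact q D * N ^ (e + 2)) := by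
        rw [show e + 2 = (e + 1) + 1 from rfl, pow_succ]; ring

lemma lamEig_anti (q α : ℝ) (hq : 0 < q) (h0 : 0 ≤ α) (h1 : α ≤ 1)
    (n m k : ℕ) (hm : 1 ≤ m) (hmk : m < k) (hkn : k ≤ n) :
    lamEig q α n k < lamEig q α n m := by
  induction k with
  | zero => omega
  | succ k ih =>
    rcases Nat.lt_or_ge m k with h | h
    · exact (lamEig_succ_lt q α hq h0 h1 n k (by omega) hkn).trans (ih h (by omega))
    · have : m = k := by omega
      subst this
      exact lamEig_succ_lt q α hq h0 h1 n m hm hkn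

theorem lamEig_distinct (q α : ℝ) (hq : 0 < q) (hα : α ∈ Set.Icc (0 : ℝ) 1)
    (n : ℕ) (hn : 2 ≤ n) :
    (∀ k j : ℕ, 2 ≤ k → k ≤ n → 1 ≤ j → j ≤ k - 1 →
        lamEig q α n k < lamEig q α n (k - j)) ∧
      ∀ k₁ k₂ : ℕ, 2 ≤ k₁ → k₁ ≤ n → 2 ≤ k₂ → k₂ ≤ n → k₁ ≠ k₂ →
        lamEig q α n k₁ ≠ lamEig q α n k₂ := by
  obtain ⟨h0, h1⟩ := hα
  constructor
  · intro k j hk hkn hj hjk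
    exact lamEig_anti q α hq h0 h1 n (k - j) k (by omega) (by omega) hkn
  · intro k₁ k₂ h2 hk1 h2' hk2 hne
    rcases Nat.lt_or_ge k₁ k₂ with h | h
    · exact (lamEig_anti q α hq h0 h1 n k₁ k₂ (by omega) h hk2).ne'
    · exact (lamEig_anti q α hq h0 h1 n k₂ k₁ (by omega) (by omega) hk1).ne
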